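/- Let f : (0,∞) → ℝ be general monotone with constants C > 1 and λ = 2^ν, let α ∈ ℝ, and suppose ∫_0^1 t^{2α+1} |f(t)| dt < ∞ and that the limit of ∫_0^N t^{2α+1} f(t) dt exists as N → ∞. Then sup_{t > 0} t^{2α+2} |f(t)| < ∞. -/

import Mathlib

open MeasureTheory Filter Set

/-- `f : (0,∞) → ℝ` is general monotone with constants `C` and `l`. -/
def GMFun (C l : ℝ) (f : ℝ → ℝ) : Prop :=
  LocallyBoundedVariationOn f (Set.Ioi 0) ∧
  Filter.Tendsto f Filter.atTop (nhds 0) ∧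
  ∀ x > (0:ℝ), eVariationOn f (Set.Icc x (2*x)) ≤
    ENNReal.ofReal (C * ∫ t in Set.Ioo (x/l) (l*x), |f t| / t)

namespace GMAux

variable {f : ℝ → ℝ}

lemma integrableOn_Icc_of_BV (hBV : LocallyBoundedVariationOn f (Ioi 0))
    {a b : ℝ} (ha : 0 < a) : IntegrableOn f (Icc a b) := by
  obtain ⟨p, q, hp, hq, hf⟩ := hBV.exists_monotoneOn_sub_monotoneOn
  rcases le_or_gt b a with hab | hab
  · rcases lt_or_eq_of_le hab with h | h
    · simp [Icc_eq_empty (not_le.mpr h)]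
    · subst h
      simp only [Icc_self]
      exact (integrableOn_singleton_iff (f := f)).mpr (Or.inr (by simp))
  · have hsub : Icc a b ⊆ Ioi 0 := fun t ht => lt_of_lt_of_le ha ht.1
    have hpi := (hp.mono hsub).integrableOn_isCompact (μ := volume) (isCompact_Icc (a := a) (b := b))
    have hqi := (hq.mono hsub).integrableOn_isCompact (μ := volume) (isCompact_Icc (a := a) (b := b))
    rw [hf]
    exact hpi.sub hqi

lemma aemeas_of_BV (hBV : LocallyBoundedVariationOn f (Ioi 0)) :
    AEMeasurable f (volume.restrict (Ioi 0)) := by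
  obtain ⟨p, q, hp, hq, hf⟩ := hBV.exists_monotoneOn_sub_monotoneOn
  rw [hf]
  exact (aemeasurable_restrict_of_monotoneOn measurableSet_Ioi hp).sub
    (aemeasurable_restrict_of_monotoneOn measurableSet_Ioi hq)

lemma contOn_rpow {a b γ : ℝ} (ha : 0 < a) :
    ContinuousOn (fun t : ℝ => t ^ γ) (Icc a b) := fun t ht =>
  (Real.continuousAt_rpow_const t γ (Or.inl (ne_of_gt (lt_of_lt_of_le ha ht.1)))).continuousWithinAt

lemma integrableOn_rpow_mul (hBV : LocallyBoundedVariationOn f (Ioi 0))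
    {a b : ℝ} (ha : 0 < a) (γ : ℝ) :
    IntegrableOn (fun t => t ^ γ * f t) (Icc a b) := by
  have h1 := integrableOn_Icc_of_BV hBV ha (b := b)
  exact IntegrableOn.continuousOn_mul (contOn_rpow ha (γ := γ)) h1 isCompact_Icc

lemma integrableOn_rpow_mul_abs (hBV : LocallyBoundedVariationOn f (Ioi 0))
    {a b : ℝ} (ha : 0 < a) (γ : ℝ) :
    IntegrableOn (fun t => t ^ γ * |f t|) (Icc a b) := by
  have h1 : IntegrableOn (fun t => |f t|) (Icc a b) volume :=
    (integrableOn_Icc_of_BV hBV ha (b := b)).abs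
  exact IntegrableOn.continuousOn_mul (contOn_rpow ha (γ := γ)) h1 isCompact_Icc

lemma integrableOn_abs_div (hBV : LocallyBoundedVariationOn f (Ioi 0))
    {a b : ℝ} (ha : 0 < a) :
    IntegrableOn (fun t => |f t| / t) (Icc a b) := by
  have h1 : IntegrableOn (fun t => |f t|) (Icc a b) volume :=
    (integrableOn_Icc_of_BV hBV ha (b := b)).abs
  have hc : ContinuousOn (fun t : ℝ => t⁻¹) (Icc a b) :=
    ContinuousOn.inv₀ continuousOn_id (fun t ht => ne_of_gt (lt_of_lt_of_le ha ht.1))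
  have h2 := h1.mul_continuousOn hc isCompact_Icc
  simpa [div_eq_mul_inv] using h2


lemma II_g (hBV : LocallyBoundedVariationOn f (Ioi 0)) {a b : ℝ} (ha : 0 < a) (hab : a ≤ b)
    (γ : ℝ) : IntervalIntegrable (fun t => t ^ γ * |f t|) volume a b := by
  constructor
  · exact (integrableOn_rpow_mul_abs hBV ha γ (b := b)).mono_set Ioc_subset_Icc_self
  · rw [Ioc_eq_empty (not_lt.mpr hab)]; exact integrableOn_empty

lemma II_f (hBV : LocallyBoundedVariationOn f (Ioi 0)) {a b : ℝ} (ha : 0 < a) (hab : a ≤ b)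
    (γ : ℝ) : IntervalIntegrable (fun t => t ^ γ * f t) volume a b := by
  constructor
  · exact (integrableOn_rpow_mul hBV ha γ (b := b)).mono_set Ioc_subset_Icc_self
  · rw [Ioc_eq_empty (not_lt.mpr hab)]; exact integrableOn_empty

lemma II_rpow {a b : ℝ} (ha : 0 < a) (hab : a ≤ b) (γ : ℝ) :
    IntervalIntegrable (fun t : ℝ => t ^ γ) volume a b := by
  constructor
  · exact ((contOn_rpow ha (b := b) (γ := γ)).integrableOn_compact isCompact_Icc).mono_set
      Ioc_subset_Icc_self
  · rw [Ioc_eq_empty (not_lt.mpr hab)]; exact integrableOn_empty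

lemma integrableOn_g_Ioc_zero (hBV : LocallyBoundedVariationOn f (Ioi 0)) {γ : ℝ}
    (hint0 : IntegrableOn (fun t => t ^ γ * |f t|) (Ioo 0 1)) (b : ℝ) :
    IntegrableOn (fun t => t ^ γ * |f t|) (Ioc 0 b) := by
  have h2 : IntegrableOn (fun t => t ^ γ * |f t|) (Ioo 0 1 ∪ Icc 1 (max 1 b)) :=
    hint0.union (integrableOn_rpow_mul_abs hBV one_pos γ)
  apply h2.mono_set
  intro t ht
  rcases lt_or_ge t 1 with h | h
  · exact Or.inl ⟨ht.1, h⟩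
  · exact Or.inr ⟨h, le_max_of_le_right ht.2⟩

lemma aemeas_fg (hBV : LocallyBoundedVariationOn f (Ioi 0)) {s : Set ℝ} (hs : s ⊆ Ioi 0)
    (γ : ℝ) : AEMeasurable (fun t => t ^ γ * f t) (volume.restrict s) := by
  have h1 : AEMeasurable f (volume.restrict s) :=
    (aemeas_of_BV hBV).mono_measure (Measure.restrict_mono hs le_rfl)
  have hrp : AEMeasurable (fun t : ℝ => t ^ γ) (volume.restrict s) :=
    (ContinuousOn.aemeasurable (fun t ht =>
      (Real.continuousAt_rpow_const t γ (Or.inl (ne_of_gt ht))).continuousWithinAt)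
      measurableSet_Ioi).mono_measure (Measure.restrict_mono hs le_rfl)
  exact hrp.mul h1

lemma integrableOn_f_Ioc_zero (hBV : LocallyBoundedVariationOn f (Ioi 0)) {γ : ℝ}
    (hint0 : IntegrableOn (fun t => t ^ γ * |f t|) (Ioo 0 1)) (b : ℝ) :
    IntegrableOn (fun t => t ^ γ * f t) (Ioc 0 b) := by
  apply Integrable.mono' (integrableOn_g_Ioc_zero hBV hint0 b)
  · exact (aemeas_fg hBV Ioc_subset_Ioi_self γ).aestronglyMeasurable
  · rw [ae_restrict_iff' measurableSet_Ioc]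
    refine ae_of_all _ (fun t ht => ?_)
    rw [Real.norm_eq_abs, abs_mul, abs_of_nonneg (Real.rpow_nonneg (le_of_lt ht.1) γ)]

lemma II_f_zero (hBV : LocallyBoundedVariationOn f (Ioi 0)) {γ : ℝ}
    (hint0 : IntegrableOn (fun t => t ^ γ * |f t|) (Ioo 0 1)) {b : ℝ} (hb : 0 ≤ b) :
    IntervalIntegrable (fun t => t ^ γ * f t) volume 0 b := by
  constructor
  · exact integrableOn_f_Ioc_zero hBV hint0 b
  · rw [Ioc_eq_empty (not_lt.mpr hb)]; exact integrableOn_empty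

lemma bdd_var (hBV : LocallyBoundedVariationOn f (Ioi 0)) {a b : ℝ} (ha : 0 < a) (hab : a ≤ b) :
    BoundedVariationOn f (Icc a b) := by
  have h0 := hBV a b ha (lt_of_lt_of_le ha hab)
  have he : Ioi (0:ℝ) ∩ Icc a b = Icc a b :=
    inter_eq_self_of_subset_right (fun t ht => lt_of_lt_of_le ha ht.1)
  rwa [he] at h0

lemma osc_le_var (hBV : LocallyBoundedVariationOn f (Ioi 0)) {a b : ℝ} (ha : 0 < a) (hab : a ≤ b)
    {s t : ℝ} (hs : s ∈ Icc a b) (ht : t ∈ Icc a b) :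
    |f s - f t| ≤ (eVariationOn f (Icc a b)).toReal := by
  have := (bdd_var hBV ha hab).dist_le hs ht
  rwa [Real.dist_eq] at this


/-- interval integral of `t^γ` over `[x,2x]`. -/
noncomputable def Pq (γ x : ℝ) : ℝ := ∫ t in x..(2*x), t ^ γ

/-- block mass of `t^γ |f t|` over `(x,2x)`. -/
noncomputable def uu (f : ℝ → ℝ) (γ x : ℝ) : ℝ := ∫ t in Ioo x (2*x), t ^ γ * |f t|

/-- variation of `f` over `[x,2x]`. -/
noncomputable def Vv (f : ℝ → ℝ) (x : ℝ) : ℝ := (eVariationOn f (Icc x (2*x))).toReal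

lemma Vv_nonneg (f : ℝ → ℝ) (x : ℝ) : 0 ≤ Vv f x := ENNReal.toReal_nonneg

lemma le_rpow_base {a b t γ : ℝ} (ha : 0 < a) (h1 : a ≤ t) (h2 : t ≤ b) :
    min (a ^ γ) (b ^ γ) ≤ t ^ γ := by
  rcases le_or_gt 0 γ with hγ | hγ
  · exact le_trans (min_le_left _ _) (Real.rpow_le_rpow ha.le h1 hγ)
  · exact le_trans (min_le_right _ _)
      (Real.rpow_le_rpow_of_nonpos (lt_of_lt_of_le ha h1) h2 hγ.le)

lemma rpow_base_le {a b t γ : ℝ} (ha : 0 < a) (h1 : a ≤ t) (h2 : t ≤ b) :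
    t ^ γ ≤ max (a ^ γ) (b ^ γ) := by
  rcases le_or_gt 0 γ with hγ | hγ
  · exact le_trans (Real.rpow_le_rpow (ha.le.trans h1) h2 hγ) (le_max_right _ _)
  · exact le_trans (Real.rpow_le_rpow_of_nonpos ha h1 hγ.le) (le_max_left _ _)

lemma min_shape {x γ : ℝ} (hx : 0 < x) :
    min (x ^ γ) ((2*x) ^ γ) * x = min 1 ((2:ℝ)^γ) * x ^ (γ+1) := by
  rw [Real.mul_rpow (by norm_num) hx.le]
  rw [show min (x ^ γ) ((2:ℝ)^γ * x ^ γ) = min 1 ((2:ℝ)^γ) * x ^ γ by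
    rw [min_mul_of_nonneg _ _ (Real.rpow_nonneg hx.le γ), one_mul]]
  rw [Real.rpow_add hx, Real.rpow_one]
  ring

lemma max_shape {x γ : ℝ} (hx : 0 < x) :
    max (x ^ γ) ((2*x) ^ γ) * x = max 1 ((2:ℝ)^γ) * x ^ (γ+1) := by
  rw [Real.mul_rpow (by norm_num) hx.le]
  rw [show max (x ^ γ) ((2:ℝ)^γ * x ^ γ) = max 1 ((2:ℝ)^γ) * x ^ γ by
    rw [max_mul_of_nonneg _ _ (Real.rpow_nonneg hx.le γ), one_mul]]
  rw [Real.rpow_add hx, Real.rpow_one]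
  ring

lemma Pq_lb {γ x : ℝ} (hx : 0 < x) : min 1 ((2:ℝ)^γ) * x ^ (γ+1) ≤ Pq γ x := by
  rw [← min_shape hx]
  have h2x : x ≤ 2*x := by linarith
  have := intervalIntegral.integral_mono_on (μ := volume) h2x
    (intervalIntegrable_const (c := min (x ^ γ) ((2*x) ^ γ))) (II_rpow hx h2x γ)
    (fun t ht => le_rpow_base hx ht.1 ht.2)
  rw [intervalIntegral.integral_const] at this
  calc min (x ^ γ) ((2*x) ^ γ) * x = (2*x - x) • min (x ^ γ) ((2*x) ^ γ) := by
        simp [smul_eq_mul]; ring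
    _ ≤ Pq γ x := this

lemma Pq_ub {γ x : ℝ} (hx : 0 < x) : Pq γ x ≤ max 1 ((2:ℝ)^γ) * x ^ (γ+1) := by
  rw [← max_shape hx]
  have h2x : x ≤ 2*x := by linarith
  have := intervalIntegral.integral_mono_on (μ := volume) h2x
    (II_rpow hx h2x γ) (intervalIntegrable_const (c := max (x ^ γ) ((2*x) ^ γ)))
    (fun t ht => rpow_base_le hx ht.1 ht.2)
  rw [intervalIntegral.integral_const] at this
  calc Pq γ x ≤ (2*x - x) • max (x ^ γ) ((2*x) ^ γ) := this
    _ = max (x ^ γ) ((2*x) ^ γ) * x := by simp [smul_eq_mul]; ring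

lemma Pq_pos {γ x : ℝ} (hx : 0 < x) : 0 < Pq γ x :=
  lt_of_lt_of_le (by
    apply mul_pos
    · exact lt_min one_pos (Real.rpow_pos_of_pos (by norm_num) γ)
    · exact Real.rpow_pos_of_pos hx _) (Pq_lb hx)

lemma uu_eq_int {γ x : ℝ} (hx : 0 < x) :
    uu f γ x = ∫ t in x..(2*x), t ^ γ * |f t| := by
  rw [intervalIntegral.integral_of_le (by linarith), uu]
  exact setIntegral_congr_set Ioo_ae_eq_Ioc

lemma uu_nonneg {γ x : ℝ} (hx : 0 ≤ x) : 0 ≤ uu f γ x := by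
  apply setIntegral_nonneg measurableSet_Ioo
  intro t ht
  exact mul_nonneg (Real.rpow_nonneg (le_trans hx ht.1.le) γ) (abs_nonneg _)

lemma gmono {γ a b c d : ℝ} (hc : 0 ≤ c)
    (hI : IntegrableOn (fun t => t ^ γ * |f t|) (Ioo c d)) (hsub : Ioo a b ⊆ Ioo c d) :
    ∫ t in Ioo a b, t ^ γ * |f t| ≤ ∫ t in Ioo c d, t ^ γ * |f t| := by
  apply setIntegral_mono_set hI
  · filter_upwards [ae_restrict_mem measurableSet_Ioo] with t ht
    simpa using mul_nonneg (Real.rpow_nonneg (le_trans hc ht.1.le) γ) (abs_nonneg _)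
  · exact HasSubset.Subset.eventuallyLE hsub


lemma var_le_window {C l x : ℝ} (hC0 : 0 ≤ C) (hl : 0 < l)
    (hGM3 : ∀ x > (0:ℝ), eVariationOn f (Icc x (2*x)) ≤
      ENNReal.ofReal (C * ∫ t in Ioo (x/l) (l*x), |f t| / t)) (hx : 0 < x) :
    Vv f x ≤ C * ∫ t in Ioo (x/l) (l*x), |f t| / t := by
  have h := hGM3 x hx
  have hR : 0 ≤ C * ∫ t in Ioo (x/l) (l*x), |f t| / t := by
    apply mul_nonneg hC0
    apply setIntegral_nonneg measurableSet_Ioo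
    intro t ht
    exact div_nonneg (abs_nonneg _) (le_of_lt (lt_trans (div_pos hx hl) ht.1))
  have := ENNReal.toReal_mono ENNReal.ofReal_ne_top h
  rwa [ENNReal.toReal_ofReal hR] at this

lemma win_split (hBV : LocallyBoundedVariationOn f (Ioi 0)) {x : ℝ} (hx : 0 < x) (m : ℕ) :
    ∫ t in Ioo x ((2:ℝ)^m * x), |f t| / t ≤
      ∑ i ∈ Finset.range m, ∫ t in Ioo ((2:ℝ)^i * x) ((2:ℝ)^(i+1) * x), |f t| / t := by
  induction m with
  | zero => simp
  | succ m ih =>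
    have hpow : (1:ℝ) ≤ (2:ℝ)^m := one_le_pow₀ (by norm_num)
    have h1 : x ≤ (2:ℝ)^m * x := le_mul_of_one_le_left hx.le hpow
    have h2 : (2:ℝ)^m * x ≤ (2:ℝ)^(m+1) * x := by
      apply mul_le_mul_of_nonneg_right _ hx.le
      exact pow_le_pow_right₀ (by norm_num) (Nat.le_succ m)
    have hIcc : IntegrableOn (fun t => |f t| / t) (Icc x ((2:ℝ)^(m+1) * x)) volume :=
      integrableOn_abs_div hBV hx
    have hnn : 0 ≤ᶠ[ae (volume.restrict (Ioo x ((2:ℝ)^m * x) ∪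
        Ico ((2:ℝ)^m * x) ((2:ℝ)^(m+1) * x)))] fun t => |f t| / t := by
      filter_upwards [ae_restrict_mem (measurableSet_Ioo.union measurableSet_Ico)] with t ht
      have h0t : 0 < t := by
        rcases ht with h | h
        · exact lt_trans hx h.1
        · exact lt_of_lt_of_le (lt_of_lt_of_le hx h1) h.1
      simpa using div_nonneg (abs_nonneg _) h0t.le
    have hIu : IntegrableOn (fun t => |f t| / t)
        (Ioo x ((2:ℝ)^m * x) ∪ Ico ((2:ℝ)^m * x) ((2:ℝ)^(m+1) * x)) volume := by
      apply hIcc.mono_set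
      rintro t (h | h)
      · exact ⟨h.1.le, h.2.le.trans h2⟩
      · exact ⟨h1.trans h.1, h.2.le⟩
    have hsub : Ioo x ((2:ℝ)^(m+1) * x) ⊆
        Ioo x ((2:ℝ)^m * x) ∪ Ico ((2:ℝ)^m * x) ((2:ℝ)^(m+1) * x) := by
      intro t ht
      rcases lt_or_ge t ((2:ℝ)^m * x) with h | h
      · exact Or.inl ⟨ht.1, h⟩
      · exact Or.inr ⟨h, ht.2⟩
    have step1 : ∫ t in Ioo x ((2:ℝ)^(m+1) * x), |f t| / t ≤
        ∫ t in (Ioo x ((2:ℝ)^m * x) ∪ Ico ((2:ℝ)^m * x) ((2:ℝ)^(m+1) * x)), |f t| / t :=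
      setIntegral_mono_set hIu hnn (HasSubset.Subset.eventuallyLE hsub)
    have hdisj : Disjoint (Ioo x ((2:ℝ)^m * x)) (Ico ((2:ℝ)^m * x) ((2:ℝ)^(m+1) * x)) := by
      apply Set.disjoint_left.mpr
      rintro t ht1 ht2
      exact absurd ht2.1 (not_le.mpr ht1.2)
    have step2 : ∫ t in (Ioo x ((2:ℝ)^m * x) ∪ Ico ((2:ℝ)^m * x) ((2:ℝ)^(m+1) * x)), |f t| / t
        = (∫ t in Ioo x ((2:ℝ)^m * x), |f t| / t) +
          ∫ t in Ico ((2:ℝ)^m * x) ((2:ℝ)^(m+1) * x), |f t| / t :=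
      setIntegral_union hdisj measurableSet_Ico (hIu.mono_set subset_union_left)
        (hIu.mono_set subset_union_right)
    have step3 : ∫ t in Ico ((2:ℝ)^m * x) ((2:ℝ)^(m+1) * x), |f t| / t
        = ∫ t in Ioo ((2:ℝ)^m * x) ((2:ℝ)^(m+1) * x), |f t| / t :=
      (setIntegral_congr_set Ioo_ae_eq_Ico).symm
    rw [Finset.sum_range_succ]
    calc ∫ t in Ioo x ((2:ℝ)^(m+1) * x), |f t| / t
        ≤ (∫ t in Ioo x ((2:ℝ)^m * x), |f t| / t) +
          ∫ t in Ioo ((2:ℝ)^m * x) ((2:ℝ)^(m+1) * x), |f t| / t := by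
          rw [← step3, ← step2]; exact step1
      _ ≤ _ := by
          exact add_le_add ih le_rfl

lemma block_div_bound (hBV : LocallyBoundedVariationOn f (Ioi 0)) {γ y : ℝ} (hy : 0 < y) :
    ∫ t in Ioo y (2*y), |f t| / t ≤
      (max 1 ((2:ℝ) ^ (-(γ+1)))) * y ^ (-(γ+1)) * uu f γ y := by
  set K := max (y ^ (-(γ+1))) ((2*y) ^ (-(γ+1))) with hK
  have h2y : y ≤ 2*y := by linarith
  have hptw : ∀ t ∈ Ioo y (2*y), |f t| / t ≤ K * (t ^ γ * |f t|) := by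
    intro t ht
    have ht0 : 0 < t := lt_trans hy ht.1
    have e1 : |f t| / t = t ^ (-(γ+1)) * (t ^ γ * |f t|) := by
      rw [← mul_assoc, ← Real.rpow_add ht0]
      rw [show -(γ+1) + γ = -1 by ring, Real.rpow_neg_one]
      rw [div_eq_mul_inv, mul_comm]
    rw [e1]
    apply mul_le_mul_of_nonneg_right _ (mul_nonneg (Real.rpow_nonneg ht0.le γ) (abs_nonneg _))
    exact rpow_base_le hy ht.1.le ht.2.le
  have hI1 : IntegrableOn (fun t => |f t| / t) (Ioo y (2*y)) volume :=
    (integrableOn_abs_div hBV hy).mono_set Ioo_subset_Icc_self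
  have hI2 : IntegrableOn (fun t => K * (t ^ γ * |f t|)) (Ioo y (2*y)) volume :=
    (((integrableOn_rpow_mul_abs hBV hy γ).mono_set Ioo_subset_Icc_self).const_mul K)
  have := setIntegral_mono_on hI1 hI2 measurableSet_Ioo hptw
  rw [MeasureTheory.integral_const_mul] at this
  calc ∫ t in Ioo y (2*y), |f t| / t ≤ K * uu f γ y := this
    _ = max 1 ((2:ℝ) ^ (-(γ+1))) * y ^ (-(γ+1)) * uu f γ y := by
        rw [hK, Real.mul_rpow (by norm_num) hy.le,
          show max (y ^ (-(γ+1))) ((2:ℝ) ^ (-(γ+1)) * y ^ (-(γ+1)))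
            = max 1 ((2:ℝ) ^ (-(γ+1))) * y ^ (-(γ+1)) by
            rw [max_mul_of_nonneg _ _ (Real.rpow_nonneg hy.le _), one_mul]]

lemma pointwise_bound (hBV : LocallyBoundedVariationOn f (Ioi 0)) {γ x : ℝ} (hx : 0 < x) :
    |f x| * Pq γ x ≤ uu f γ x + Vv f x * Pq γ x := by
  have h2x : x ≤ 2*x := by linarith
  have hptw : ∀ t ∈ Icc x (2*x), |f x| * t ^ γ ≤ t ^ γ * |f t| + Vv f x * t ^ γ := by
    intro t ht
    have h1 : |f x| ≤ |f t| + Vv f x := by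
      have h2 : |f x| - |f t| ≤ |f x - f t| := abs_sub_abs_le_abs_sub _ _
      have h3 : |f x - f t| ≤ Vv f x :=
        osc_le_var hBV hx h2x (left_mem_Icc.mpr h2x) ht
      linarith
    have h4 : 0 ≤ t ^ γ := Real.rpow_nonneg (le_trans hx.le ht.1) γ
    calc |f x| * t ^ γ ≤ (|f t| + Vv f x) * t ^ γ := mul_le_mul_of_nonneg_right h1 h4
      _ = t ^ γ * |f t| + Vv f x * t ^ γ := by ring
  have hIl : IntervalIntegrable (fun t => |f x| * t ^ γ) volume x (2*x) :=
    (II_rpow hx h2x γ).const_mul _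
  have hIr : IntervalIntegrable (fun t => t ^ γ * |f t| + Vv f x * t ^ γ) volume x (2*x) :=
    (II_g hBV hx h2x γ).add ((II_rpow hx h2x γ).const_mul _)
  have := intervalIntegral.integral_mono_on h2x hIl hIr hptw
  rw [intervalIntegral.integral_const_mul] at this
  rw [intervalIntegral.integral_add (II_g hBV hx h2x γ) ((II_rpow hx h2x γ).const_mul _)] at this
  rw [intervalIntegral.integral_const_mul] at this
  rw [uu_eq_int hx, Pq]
  exact this


lemma int_Ioo_eq (g : ℝ → ℝ) {a b : ℝ} (hab : a ≤ b) :
    ∫ t in Ioo a b, g t = ∫ t in a..b, g t := by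
  rw [intervalIntegral.integral_of_le hab]
  exact setIntegral_congr_set Ioo_ae_eq_Ioc

lemma piece_bound (hBV : LocallyBoundedVariationOn f (Ioi 0)) {γ B δ a b : ℝ} (hB0 : 0 ≤ B)
    (hB : ∀ p q : ℝ, 1 ≤ p → p ≤ q → |∫ t in p..q, t ^ γ * f t| ≤ B)
    (h1a : 1 ≤ a) (hab : a ≤ b) (hδ : 0 ≤ δ)
    (hosc : ∀ p ∈ Ioo a b, ∀ q ∈ Ioo a b, |f q - f p| ≤ δ) :
    ∫ t in a..b, t ^ γ * |f t| ≤ B + 2*δ*∫ t in a..b, t ^ γ := by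
  have ha0 : (0:ℝ) < a := lt_of_lt_of_le one_pos h1a
  rcases eq_or_lt_of_le hab with h | hlt
  · subst h
    simp only [intervalIntegral.integral_same, mul_zero]
    linarith
  · have hII_f := II_f hBV ha0 hab γ
    have hII_p := II_rpow ha0 hab γ
    have hIoo_g : IntegrableOn (fun t => t ^ γ * |f t|) (Ioo a b) volume :=
      (integrableOn_rpow_mul_abs hBV ha0 γ).mono_set Ioo_subset_Icc_self
    have hIoo_f : IntegrableOn (fun t => t ^ γ * f t) (Ioo a b) volume :=
      (integrableOn_rpow_mul hBV ha0 γ).mono_set Ioo_subset_Icc_self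
    have hIoo_p : IntegrableOn (fun t : ℝ => t ^ γ) (Ioo a b) volume :=
      ((contOn_rpow ha0 (b := b) (γ := γ)).integrableOn_compact isCompact_Icc).mono_set
        Ioo_subset_Icc_self
    have hτ : (a+b)/2 ∈ Ioo a b := ⟨by linarith, by linarith⟩
    have habs : ∀ t ∈ Ioo a b, (0:ℝ) ≤ t ^ γ := fun t ht =>
      Real.rpow_nonneg (le_of_lt (lt_trans ha0 ht.1)) γ
    rcases le_or_gt 0 (f ((a+b)/2)) with hs | hs
    · have hptw : ∀ t ∈ Ioo a b, t ^ γ * |f t| ≤ t ^ γ * f t + 2*δ*t ^ γ := by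
        intro t ht
        have h5 := hosc ((a+b)/2) hτ t ht
        have h6 : -δ ≤ f t := by
          have := abs_le.mp h5
          linarith
        have h7 : |f t| ≤ f t + 2*δ := by
          rcases le_or_gt 0 (f t) with h | h
          · rw [abs_of_nonneg h]; linarith
          · rw [abs_of_neg h]; linarith
        nlinarith [habs t ht, mul_le_mul_of_nonneg_left h7 (habs t ht)]
      have h8 : ∫ t in a..b, t ^ γ * |f t| ≤ ∫ t in a..b, (t ^ γ * f t + 2*δ*t ^ γ) := by
        rw [← int_Ioo_eq _ hab, ← int_Ioo_eq _ hab]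
        exact setIntegral_mono_on hIoo_g (hIoo_f.add (hIoo_p.const_mul _)) measurableSet_Ioo hptw
      rw [intervalIntegral.integral_add hII_f (hII_p.const_mul _),
        intervalIntegral.integral_const_mul] at h8
      have h9 : ∫ t in a..b, t ^ γ * f t ≤ B := le_trans (le_abs_self _) (hB a b h1a hab)
      linarith
    · have hptw : ∀ t ∈ Ioo a b, t ^ γ * |f t| ≤ -(t ^ γ * f t) + 2*δ*t ^ γ := by
        intro t ht
        have h5 := hosc ((a+b)/2) hτ t ht
        have h6 : f t ≤ δ := by
          have := abs_le.mp h5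
          linarith
        have h7 : |f t| ≤ -(f t) + 2*δ := by
          rcases le_or_gt 0 (f t) with h | h
          · rw [abs_of_nonneg h]; linarith
          · rw [abs_of_neg h]; linarith
        nlinarith [habs t ht, mul_le_mul_of_nonneg_left h7 (habs t ht)]
      have h8 : ∫ t in a..b, t ^ γ * |f t| ≤ ∫ t in a..b, (-(t ^ γ * f t) + 2*δ*t ^ γ) := by
        rw [← int_Ioo_eq _ hab, ← int_Ioo_eq _ hab]
        have hIoo_fn : IntegrableOn (fun t => -(t ^ γ * f t)) (Ioo a b) volume := hIoo_f.neg
        exact setIntegral_mono_on hIoo_g (hIoo_fn.add (hIoo_p.const_mul _))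
          measurableSet_Ioo hptw
      have hII_fn : IntervalIntegrable (fun t => -(t ^ γ * f t)) volume a b := hII_f.neg
      rw [intervalIntegral.integral_add hII_fn (hII_p.const_mul _),
        intervalIntegral.integral_const_mul, intervalIntegral.integral_neg] at h8
      have h9 : -∫ t in a..b, t ^ γ * f t ≤ B := le_trans (neg_le_abs _) (hB a b h1a hab)
      linarith


lemma core_delta (hBV : LocallyBoundedVariationOn f (Ioi 0)) {γ B x δ : ℝ} (hB0 : 0 ≤ B)
    (hB : ∀ p q : ℝ, 1 ≤ p → p ≤ q → |∫ t in p..q, t ^ γ * f t| ≤ B)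
    (hx : 1 ≤ x) (hδ : 0 < δ) :
    uu f γ x ≤ ((⌈Vv f x / δ⌉₊ : ℝ) + 1) * B + 2*δ*Pq γ x := by
  have x0 : (0:ℝ) < x := lt_of_lt_of_le one_pos hx
  have h2x : x ≤ 2*x := by linarith
  set m := ⌈Vv f x / δ⌉₊ with hm
  set vv : ℝ → ℝ := fun t => variationOnFromTo f (Ioi 0) x t with hvv
  have hxIoi : x ∈ Ioi (0:ℝ) := mem_Ioi.mpr x0
  have hmono : ∀ p q : ℝ, x ≤ p → p ≤ q → vv p ≤ vv q := by
    intro p q hp hq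
    exact variationOnFromTo.monotoneOn hBV hxIoi
      (mem_Ioi.mpr (lt_of_lt_of_le x0 hp)) (mem_Ioi.mpr (lt_of_lt_of_le x0 (hp.trans hq))) hq
  have hdiff : ∀ p q : ℝ, x ≤ p → p ≤ q → |f q - f p| ≤ vv q - vv p := by
    intro p q hp hpq
    have hp0 : p ∈ Ioi (0:ℝ) := mem_Ioi.mpr (lt_of_lt_of_le x0 hp)
    have hq0 : q ∈ Ioi (0:ℝ) := mem_Ioi.mpr (lt_of_lt_of_le x0 (hp.trans hpq))
    have hadd : vv p + variationOnFromTo f (Ioi 0) p q = vv q :=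
      variationOnFromTo.add hBV hxIoi hp0 hq0
    have hle : |f q - f p| ≤ variationOnFromTo f (Ioi 0) p q := by
      rw [variationOnFromTo.eq_of_le f (Ioi 0) hpq]
      have h1 : |f q - f p| = dist (f q) (f p) := (Real.dist_eq _ _).symm
      rw [h1, dist_edist]
      apply ENNReal.toReal_mono (hBV p q hp0 hq0)
      exact eVariationOn.edist_le f ⟨hq0, hpq, le_rfl⟩ ⟨hp0, le_rfl, hpq⟩
    linarith
  have vx : vv x = 0 := variationOnFromTo.self f (Ioi 0) x
  have vnonneg : ∀ t, x ≤ t → 0 ≤ vv t := fun t ht => by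
    rw [← vx]; exact hmono x t le_rfl ht
  have v2x : vv (2*x) = Vv f x := by
    show variationOnFromTo f (Ioi 0) x (2*x) = Vv f x
    rw [variationOnFromTo.eq_of_le f (Ioi 0) h2x]
    have he : Ioi (0:ℝ) ∩ Icc x (2*x) = Icc x (2*x) :=
      inter_eq_self_of_subset_right (fun t ht => lt_of_lt_of_le x0 ht.1)
    rw [he, Vv]
  set S : ℕ → Set ℝ := fun i => {t | t ∈ Icc x (2*x) ∧ vv t ≤ (i:ℝ) * δ} with hS
  have hxS : ∀ i, x ∈ S i := fun i => ⟨left_mem_Icc.mpr h2x, by rw [vx]; positivity⟩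
  have hne : ∀ i, (S i).Nonempty := fun i => ⟨x, hxS i⟩
  have hbdd : ∀ i, BddAbove (S i) := fun i => ⟨2*x, fun t ht => ht.1.2⟩
  set s : ℕ → ℝ := fun i => sSup (S i) with hs
  have hsx : ∀ i, x ≤ s i := fun i => le_csSup (hbdd i) (hxS i)
  have hs2x : ∀ i, s i ≤ 2*x := fun i => csSup_le (hne i) (fun t ht => ht.1.2)
  have hsmono : ∀ i j : ℕ, i ≤ j → s i ≤ s j := by
    intro i j hij
    apply csSup_le_csSup (hbdd j) (hne i)
    intro t ht
    refine ⟨ht.1, le_trans ht.2 ?_⟩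
    apply mul_le_mul_of_nonneg_right _ hδ.le
    exact_mod_cast hij
  have hsm : s m = 2*x := by
    apply le_antisymm (hs2x m)
    apply le_csSup (hbdd m)
    refine ⟨right_mem_Icc.mpr h2x, ?_⟩
    rw [v2x]
    exact (div_le_iff₀ hδ).mp (Nat.le_ceil _)
  set r : ℕ → ℝ := fun i => Nat.casesOn i x (fun j => s j) with hr
  have hr0 : r 0 = x := rfl
  have hrsucc : ∀ i, r (i+1) = s i := fun i => rfl
  have hrx : ∀ i, x ≤ r i := by
    intro i
    cases i with
    | zero => exact le_rfl
    | succ j => exact hsx j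
  have hradj : ∀ i, r i ≤ r (i+1) := by
    intro i
    cases i with
    | zero => exact hsx 0
    | succ j => exact hsmono j (j+1) (Nat.le_succ j)
  have hr2x : ∀ i, r i ≤ 2*x := by
    intro i
    cases i with
    | zero => exact h2x
    | succ j => exact hs2x j
  have hub : ∀ i : ℕ, ∀ t, x ≤ t → t < s i → vv t ≤ (i:ℝ)*δ := by
    intro i t hxt hts
    obtain ⟨w, hw, htw⟩ := exists_lt_of_lt_csSup (hne i) hts
    exact le_trans (hmono t w hxt htw.le) hw.2
  have hlb : ∀ j : ℕ, ∀ t, t ∈ Icc x (2*x) → s j < t → (j:ℝ)*δ < vv t := by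
    intro j t ht hst
    by_contra h
    push_neg at h
    exact absurd (le_csSup (hbdd j) ⟨ht, h⟩) (not_le.mpr hst)
  have hosc : ∀ i, ∀ p ∈ Ioo (r i) (r (i+1)), ∀ q ∈ Ioo (r i) (r (i+1)), |f q - f p| ≤ δ := by
    have key : ∀ i, ∀ p ∈ Ioo (r i) (r (i+1)), ∀ q ∈ Ioo (r i) (r (i+1)), p ≤ q →
        |f q - f p| ≤ δ := by
      intro i p hp q hq hpq
      have hxp : x ≤ p := le_trans (hrx i) hp.1.le
      have hxq : x ≤ q := le_trans (hrx i) hq.1.le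
      have hq2x : q ≤ 2*x := le_trans hq.2.le (hr2x (i+1))
      have hd := hdiff p q hxp hpq
      have hqu : vv q ≤ (i:ℝ)*δ := by
        apply hub i q hxq
        rw [← hrsucc i]
        exact hq.2
      cases i with
      | zero =>
        have h1 : 0 ≤ vv p := vnonneg p hxp
        simp only [Nat.cast_zero, zero_mul] at hqu
        linarith
      | succ j =>
        have h1 : (j:ℝ)*δ < vv p := by
          apply hlb j p ⟨hxp, le_trans hp.2.le (hr2x (j+1+1))⟩
          rw [← hrsucc j]
          exact hp.1
        have h2 : ((j+1:ℕ):ℝ)*δ = (j:ℝ)*δ + δ := by push_cast; ring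
        rw [h2] at hqu
        linarith
    intro i p hp q hq
    rcases le_total p q with h | h
    · exact key i p hp q hq h
    · rw [abs_sub_comm]
      exact key i q hq p hp h
  have hri0 : ∀ i, (0:ℝ) < r i := fun i => lt_of_lt_of_le x0 (hrx i)
  have hII : ∀ k < m+1, IntervalIntegrable (fun t => t ^ γ * |f t|) volume (r k) (r (k+1)) :=
    fun k _ => II_g hBV (hri0 k) (hradj k) γ
  have hIIp : ∀ k < m+1, IntervalIntegrable (fun t : ℝ => t ^ γ) volume (r k) (r (k+1)) :=
    fun k _ => II_rpow (hri0 k) (hradj k) γ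
  have hsum := intervalIntegral.sum_integral_adjacent_intervals hII
  have hsump := intervalIntegral.sum_integral_adjacent_intervals hIIp
  have hrlast : r (m+1) = 2*x := by rw [hrsucc]; exact hsm
  rw [hr0, hrlast] at hsum hsump
  have hpiece : ∀ k ∈ Finset.range (m+1),
      ∫ t in (r k)..(r (k+1)), t ^ γ * |f t| ≤
        B + 2*δ*∫ t in (r k)..(r (k+1)), t ^ γ := fun k _ =>
    piece_bound hBV hB0 hB (le_trans hx (hrx k)) (hradj k) hδ.le (hosc k)
  calc uu f γ x = ∑ k ∈ Finset.range (m+1), ∫ t in (r k)..(r (k+1)), t ^ γ * |f t| :=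
        (uu_eq_int x0).trans hsum.symm
    _ ≤ ∑ k ∈ Finset.range (m+1), (B + 2*δ*∫ t in (r k)..(r (k+1)), t ^ γ) :=
        Finset.sum_le_sum hpiece
    _ = ((m:ℝ)+1) * B + 2*δ*∑ k ∈ Finset.range (m+1), ∫ t in (r k)..(r (k+1)), t ^ γ := by
        rw [Finset.sum_add_distrib, Finset.sum_const, Finset.card_range, ← Finset.mul_sum]
        push_cast [nsmul_eq_mul]
        ring
    _ = ((m:ℝ)+1) * B + 2*δ*Pq γ x := by rw [hsump]; rfl

lemma core (hBV : LocallyBoundedVariationOn f (Ioi 0)) {γ B x : ℝ} (hB1 : 1 ≤ B)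
    (hB : ∀ p q : ℝ, 1 ≤ p → p ≤ q → |∫ t in p..q, t ^ γ * f t| ≤ B)
    (hx : 1 ≤ x) :
    uu f γ x ≤ 2*B + 3*Real.sqrt (B * (Vv f x * Pq γ x)) := by
  have hB0 : (0:ℝ) ≤ B := le_trans zero_le_one hB1
  have x0 : (0:ℝ) < x := lt_of_lt_of_le one_pos hx
  have hP : 0 < Pq γ x := Pq_pos x0
  have hsq : 0 ≤ Real.sqrt (B * (Vv f x * Pq γ x)) := Real.sqrt_nonneg _
  rcases eq_or_lt_of_le (Vv_nonneg f x) with hV | hV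
  · -- V = 0
    have key : ∀ ε > (0:ℝ), uu f γ x ≤ B + ε := by
      intro ε hε
      have hδ : 0 < ε / (2 * Pq γ x) := by positivity
      have := core_delta hBV hB0 hB hx hδ
      rw [← hV] at this
      simp only [zero_div, Nat.ceil_zero, Nat.cast_zero, zero_add, one_mul] at this
      calc uu f γ x ≤ B + 2*(ε / (2 * Pq γ x))*Pq γ x := this
        _ = B + ε := by field_simp
    have h2 : uu f γ x ≤ B := by
      by_contra h
      push_neg at h
      have := key ((uu f γ x - B)/2) (by linarith)
      linarith
    linarith
  · -- V > 0
    set W := Real.sqrt (B * (Vv f x * Pq γ x)) with hW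
    have hWpos : 0 < W := Real.sqrt_pos.mpr (by positivity)
    have hWsq : W^2 = B * (Vv f x * Pq γ x) := Real.sq_sqrt (by positivity)
    set δ := W / Pq γ x with hδdef
    have hδ : 0 < δ := by positivity
    have h1 := core_delta hBV hB0 hB hx hδ
    have hceil : (⌈Vv f x / δ⌉₊ : ℝ) ≤ Vv f x / δ + 1 :=
      le_of_lt (Nat.ceil_lt_add_one (by positivity))
    have h2 : uu f γ x ≤ (Vv f x / δ + 2) * B + 2*δ*Pq γ x := by
      have hle : ((⌈Vv f x / δ⌉₊ : ℝ) + 1) * B ≤ (Vv f x / δ + 2) * B := by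
        apply mul_le_mul_of_nonneg_right _ hB0
        linarith
      linarith
    have e1 : 2*δ*Pq γ x = 2*W := by
      rw [hδdef]
      field_simp
    have e2 : Vv f x / δ * B = W := by
      rw [hδdef]
      rw [div_div_eq_mul_div]
      rw [div_mul_eq_mul_div]
      rw [div_eq_iff (ne_of_gt hWpos)]
      nlinarith [hWsq]
    calc uu f γ x ≤ (Vv f x / δ + 2) * B + 2*δ*Pq γ x := h2
      _ = Vv f x / δ * B + 2*B + 2*W := by rw [e1]; ring
      _ = W + 2*B + 2*W := by rw [e2]
      _ ≤ 2*B + 3*W := by linarith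


lemma assemble (hBV : LocallyBoundedVariationOn f (Ioi 0)) {C : ℝ} (hC0 : 0 ≤ C) {ν : ℕ}
    {γ x : ℝ}
    (hGM3 : ∀ x > (0:ℝ), eVariationOn f (Icc x (2*x)) ≤
      ENNReal.ofReal (C * ∫ t in Ioo (x/(2:ℝ)^ν) ((2:ℝ)^ν*x), |f t| / t)) (hx : 0 < x) :
    Vv f x * Pq γ x ≤
      C * (max 1 ((2:ℝ)^(-(γ+1)))) * (max 1 ((2:ℝ)^γ)) *
        (max ((((2:ℝ)^ν)⁻¹) ^ (γ+1)) (((2:ℝ)^ν) ^ (γ+1))) *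
        ∑ i ∈ Finset.range (2*ν), uu f γ ((2:ℝ)^i * (x/(2:ℝ)^ν)) := by
  set l : ℝ := (2:ℝ)^ν with hldef
  have hl : (0:ℝ) < l := pow_pos (by norm_num) ν
  have hl1 : (1:ℝ) ≤ l := one_le_pow₀ (by norm_num)
  set q₄ : ℝ := max 1 ((2:ℝ)^(-(γ+1))) with hq4
  set q₂ : ℝ := max 1 ((2:ℝ)^γ) with hq2
  set q₅ : ℝ := max ((l⁻¹) ^ (γ+1)) (l ^ (γ+1)) with hq5
  have hq40 : 0 ≤ q₄ := le_trans zero_le_one (le_max_left _ _)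
  have hq20 : 0 ≤ q₂ := le_trans zero_le_one (le_max_left _ _)
  have hy : ∀ i : ℕ, (0:ℝ) < (2:ℝ)^i * (x/l) := fun i =>
    mul_pos (pow_pos (by norm_num) i) (div_pos hx hl)
  have hu0 : ∀ i : ℕ, 0 ≤ uu f γ ((2:ℝ)^i * (x/l)) := fun i => uu_nonneg (hy i).le
  -- step 1 : variation bounded by window integral
  have h1 : Vv f x ≤ C * ∫ t in Ioo (x/l) (l*x), |f t| / t :=
    var_le_window hC0 hl hGM3 hx
  -- step 2 : window splits into 2ν dyadic blocks
  have e1 : l * x = (2:ℝ)^(2*ν) * (x/l) := by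
    rw [two_mul, pow_add]
    field_simp
    rw [hldef]
  have h2 : ∫ t in Ioo (x/l) (l*x), |f t| / t ≤
      ∑ i ∈ Finset.range (2*ν), ∫ t in Ioo ((2:ℝ)^i * (x/l)) ((2:ℝ)^(i+1) * (x/l)), |f t| / t := by
    rw [e1]
    exact win_split hBV (div_pos hx hl) (2*ν)
  -- step 3 : each block bounded via uu
  have h3 : ∀ i : ℕ, ∫ t in Ioo ((2:ℝ)^i * (x/l)) ((2:ℝ)^(i+1) * (x/l)), |f t| / t ≤
      q₄ * ((2:ℝ)^i * (x/l)) ^ (-(γ+1)) * uu f γ ((2:ℝ)^i * (x/l)) := by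
    intro i
    have e2 : (2:ℝ)^(i+1) * (x/l) = 2 * ((2:ℝ)^i * (x/l)) := by
      rw [pow_succ]
      ring
    rw [e2]
    exact block_div_bound hBV (hy i)
  have h4 : Vv f x ≤ C * q₄ * ∑ i ∈ Finset.range (2*ν),
      ((2:ℝ)^i * (x/l)) ^ (-(γ+1)) * uu f γ ((2:ℝ)^i * (x/l)) := by
    calc Vv f x ≤ C * ∫ t in Ioo (x/l) (l*x), |f t| / t := h1
      _ ≤ C * ∑ i ∈ Finset.range (2*ν),
          ∫ t in Ioo ((2:ℝ)^i * (x/l)) ((2:ℝ)^(i+1) * (x/l)), |f t| / t :=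
          mul_le_mul_of_nonneg_left h2 hC0
      _ ≤ C * ∑ i ∈ Finset.range (2*ν),
          (q₄ * ((2:ℝ)^i * (x/l)) ^ (-(γ+1)) * uu f γ ((2:ℝ)^i * (x/l))) := by
          apply mul_le_mul_of_nonneg_left _ hC0
          exact Finset.sum_le_sum (fun i _ => h3 i)
      _ = C * q₄ * ∑ i ∈ Finset.range (2*ν),
          ((2:ℝ)^i * (x/l)) ^ (-(γ+1)) * uu f γ ((2:ℝ)^i * (x/l)) := by
          rw [Finset.mul_sum, Finset.mul_sum]
          apply Finset.sum_congr rfl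
          intro i _
          ring
  -- step 4 : combine with Pq bound and ratio bounds
  have hsum0 : 0 ≤ ∑ i ∈ Finset.range (2*ν),
      ((2:ℝ)^i * (x/l)) ^ (-(γ+1)) * uu f γ ((2:ℝ)^i * (x/l)) :=
    Finset.sum_nonneg (fun i _ => mul_nonneg (Real.rpow_nonneg (hy i).le _) (hu0 i))
  have hratio : ∀ i ∈ Finset.range (2*ν),
      x ^ (γ+1) * ((2:ℝ)^i * (x/l)) ^ (-(γ+1)) ≤ q₅ := by
    intro i hi
    have hyi := hy i
    have e3 : x ^ (γ+1) * ((2:ℝ)^i * (x/l)) ^ (-(γ+1)) = (x / ((2:ℝ)^i * (x/l))) ^ (γ+1) := by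
      rw [Real.rpow_neg hyi.le, Real.div_rpow hx.le hyi.le]
      ring
    rw [e3]
    have e4 : x / ((2:ℝ)^i * (x/l)) = l / (2:ℝ)^i := by
      field_simp
    rw [e4]
    apply rpow_base_le (inv_pos.mpr hl)
    · rw [inv_eq_one_div, div_le_div_iff₀ hl (pow_pos (by norm_num : (0:ℝ) < 2) i), one_mul]
      calc (2:ℝ)^i ≤ (2:ℝ)^(2*ν) :=
          pow_le_pow_right₀ (by norm_num) (le_of_lt (Finset.mem_range.mp hi))
        _ = l * l := by rw [two_mul, pow_add]
    · exact div_le_self hl.le (one_le_pow₀ (by norm_num))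
  calc Vv f x * Pq γ x
      ≤ (C * q₄ * ∑ i ∈ Finset.range (2*ν),
          ((2:ℝ)^i * (x/l)) ^ (-(γ+1)) * uu f γ ((2:ℝ)^i * (x/l))) * (q₂ * x ^ (γ+1)) := by
        apply mul_le_mul h4 (Pq_ub hx) (Pq_pos hx).le
        exact mul_nonneg (mul_nonneg hC0 hq40) hsum0
    _ = ∑ i ∈ Finset.range (2*ν), (C * q₄ * q₂) *
          ((x ^ (γ+1) * ((2:ℝ)^i * (x/l)) ^ (-(γ+1))) * uu f γ ((2:ℝ)^i * (x/l))) := by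
        rw [Finset.mul_sum, Finset.sum_mul]
        apply Finset.sum_congr rfl
        intro i _
        ring
    _ ≤ ∑ i ∈ Finset.range (2*ν), (C * q₄ * q₂) * (q₅ * uu f γ ((2:ℝ)^i * (x/l))) := by
        apply Finset.sum_le_sum
        intro i hi
        apply mul_le_mul_of_nonneg_left _ (mul_nonneg (mul_nonneg hC0 hq40) hq20)
        exact mul_le_mul_of_nonneg_right (hratio i hi) (hu0 i)
    _ = C * q₄ * q₂ * q₅ * ∑ i ∈ Finset.range (2*ν), uu f γ ((2:ℝ)^i * (x/l)) := by
        rw [Finset.mul_sum]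
        apply Finset.sum_congr rfl
        intro i _
        ring


set_option maxHeartbeats 1000000 in
lemma ubound (hBV : LocallyBoundedVariationOn f (Ioi 0)) {C : ℝ} (hC0 : 0 ≤ C) {ν : ℕ}
    {γ B S A₄ : ℝ}
    (hGM3 : ∀ x > (0:ℝ), eVariationOn f (Icc x (2*x)) ≤
      ENNReal.ofReal (C * ∫ t in Ioo (x/(2:ℝ)^ν) ((2:ℝ)^ν*x), |f t| / t))
    (hB1 : 1 ≤ B)
    (hB : ∀ p q : ℝ, 1 ≤ p → p ≤ q → |∫ t in p..q, t ^ γ * f t| ≤ B)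
    (hS0 : 0 ≤ S) (hS : ∀ t : ℝ, 1 ≤ t → |f t| ≤ S)
    (hβ : 0 < γ + 1)
    (hA4 : ∀ x : ℝ, 1 ≤ x → x ≤ (2:ℝ)^ν → uu f γ x ≤ A₄) :
    ∃ R : ℝ, 1 ≤ R ∧ ∀ x : ℝ, 1 ≤ x → uu f γ x ≤ R := by
  set l : ℝ := (2:ℝ)^ν with hldef
  have hl : (0:ℝ) < l := pow_pos (by norm_num) ν
  have hl1 : (1:ℝ) ≤ l := one_le_pow₀ (by norm_num)
  set q₄ : ℝ := max 1 ((2:ℝ)^(-(γ+1))) with hq4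
  set q₂ : ℝ := max 1 ((2:ℝ)^γ) with hq2
  set q₅ : ℝ := max ((l⁻¹) ^ (γ+1)) (l ^ (γ+1)) with hq5
  have hq40 : 0 ≤ q₄ := le_trans zero_le_one (le_max_left _ _)
  have hq20 : 0 ≤ q₂ := le_trans zero_le_one (le_max_left _ _)
  have hq50 : 0 ≤ q₅ := le_trans (Real.rpow_nonneg (inv_pos.mpr hl).le _) (le_max_left _ _)
  set lβ : ℝ := l ^ (γ+1) with hlβ
  have hlβ0 : 0 ≤ lβ := Real.rpow_nonneg hl.le _
  have hB0 : 0 ≤ B := le_trans zero_le_one hB1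
  set P : ℝ := B * (C * q₄ * q₂ * q₅) * (2*ν) * lβ with hP
  have hP0 : 0 ≤ P := by positivity
  set R : ℝ := max (max (q₂*S + 1) (A₄ + 1)) ((2*B + 3*Real.sqrt P + 1)^2) with hR
  have hRsq : (2*B + 3*Real.sqrt P + 1)^2 ≤ R := le_max_right _ _
  have hP1 : 0 ≤ 2*B + 3*Real.sqrt P + 1 := by positivity
  have hR1 : 1 ≤ R := by
    apply le_trans _ hRsq
    nlinarith [Real.sqrt_nonneg P]
  have hR0 : 0 ≤ R := le_trans zero_le_one hR1
  have hsqR : 2*B + 3*Real.sqrt P + 1 ≤ Real.sqrt R := by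
    calc 2*B + 3*Real.sqrt P + 1 = Real.sqrt ((2*B + 3*Real.sqrt P + 1)^2) :=
          (Real.sqrt_sq hP1).symm
      _ ≤ Real.sqrt R := Real.sqrt_le_sqrt hRsq
  have hsqR1 : 1 ≤ Real.sqrt R := by
    calc (1:ℝ) = Real.sqrt 1 := Real.sqrt_one.symm
      _ ≤ Real.sqrt R := Real.sqrt_le_sqrt hR1
  have hRcond : 2*B + 3*Real.sqrt P * Real.sqrt R ≤ R := by
    have h1 : 2*B + 3*Real.sqrt P * Real.sqrt R ≤ (2*B + 3*Real.sqrt P + 1) * Real.sqrt R := by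
      have h2 : 2*B ≤ 2*B*Real.sqrt R := le_mul_of_one_le_right (by positivity) hsqR1
      nlinarith [Real.sqrt_nonneg P, Real.sqrt_nonneg R]
    calc 2*B + 3*Real.sqrt P * Real.sqrt R ≤ (2*B + 3*Real.sqrt P + 1) * Real.sqrt R := h1
      _ ≤ Real.sqrt R * Real.sqrt R := mul_le_mul_of_nonneg_right hsqR (Real.sqrt_nonneg R)
      _ = R := Real.mul_self_sqrt hR0
  -- a priori bound
  have hap : ∀ x : ℝ, 1 ≤ x → uu f γ x ≤ q₂ * S * x ^ (γ+1) := by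
    intro x hx
    have x0 : (0:ℝ) < x := lt_of_lt_of_le one_pos hx
    have hptw : ∀ t ∈ Ioo x (2*x), t ^ γ * |f t| ≤ t ^ γ * S := fun t ht =>
      mul_le_mul_of_nonneg_left (hS t (le_trans hx ht.1.le))
        (Real.rpow_nonneg (le_trans x0.le ht.1.le) γ)
    have hIg : IntegrableOn (fun t => t ^ γ * |f t|) (Ioo x (2*x)) volume :=
      (integrableOn_rpow_mul_abs hBV x0 γ).mono_set Ioo_subset_Icc_self
    have hIp : IntegrableOn (fun t : ℝ => t ^ γ * S) (Ioo x (2*x)) volume := by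
      apply IntegrableOn.mul_continuousOn _ (continuousOn_const) isCompact_Icc |>.mono_set
        Ioo_subset_Icc_self
      exact (contOn_rpow x0 (b := 2*x) (γ := γ)).integrableOn_compact isCompact_Icc
    have h1 := setIntegral_mono_on hIg hIp measurableSet_Ioo hptw
    have h2 : ∫ t in Ioo x (2*x), t ^ γ * S = S * Pq γ x := by
      rw [int_Ioo_eq _ (by linarith : x ≤ 2*x)]
      rw [show (fun t : ℝ => t ^ γ * S) = (fun t : ℝ => S * t ^ γ) from funext (fun t => by ring)]
      rw [intervalIntegral.integral_const_mul]
      rfl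
    calc uu f γ x ≤ ∫ t in Ioo x (2*x), t ^ γ * S := h1
      _ = S * Pq γ x := h2
      _ ≤ S * (q₂ * x ^ (γ+1)) := mul_le_mul_of_nonneg_left (Pq_ub x0) hS0
      _ = q₂ * S * x ^ (γ+1) := by ring
  -- main induction
  have main : ∀ n : ℕ, ∀ x : ℝ, 1 ≤ x → uu f γ x ≤ R * x ^ ((γ+1) * (1/2:ℝ)^n) := by
    intro n
    induction n with
    | zero =>
      intro x hx
      have x0 : (0:ℝ) < x := lt_of_lt_of_le one_pos hx
      simp only [pow_zero, mul_one]
      calc uu f γ x ≤ q₂ * S * x ^ (γ+1) := hap x hx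
        _ ≤ R * x ^ (γ+1) := by
            apply mul_le_mul_of_nonneg_right _ (Real.rpow_nonneg x0.le _)
            calc q₂ * S ≤ q₂*S + 1 := by linarith
              _ ≤ max (q₂*S + 1) (A₄ + 1) := le_max_left _ _
              _ ≤ R := le_max_left _ _
    | succ n ih =>
      intro x hx
      have x0 : (0:ℝ) < x := lt_of_lt_of_le one_pos hx
      have hε0 : 0 ≤ (γ+1) * (1/2:ℝ)^(n+1) := by positivity
      have hx1 : 1 ≤ x ^ ((γ+1) * (1/2:ℝ)^(n+1)) := Real.one_le_rpow hx hε0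
      rcases le_or_gt x l with hxl | hxl
      · calc uu f γ x ≤ A₄ := hA4 x hx hxl
          _ ≤ max (q₂*S + 1) (A₄ + 1) := le_trans (by linarith) (le_max_right _ _)
          _ ≤ R := le_max_left _ _
          _ ≤ R * x ^ ((γ+1) * (1/2:ℝ)^(n+1)) := le_mul_of_one_le_right hR0 hx1
      · -- x > l : use core + assemble + ih
        have hcore := core hBV hB1 hB hx
        have hass := assemble hBV hC0 (γ := γ) hGM3 x0
        -- bound each u (y i) via ih
        have hui : ∀ i ∈ Finset.range (2*ν),
            uu f γ ((2:ℝ)^i * (x/l)) ≤ R * lβ * x ^ ((γ+1) * (1/2:ℝ)^n) := by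
          intro i hi
          set y : ℝ := (2:ℝ)^i * (x/l) with hy
          have hy0 : (0:ℝ) < y := mul_pos (pow_pos (by norm_num) i) (div_pos x0 hl)
          have hy1 : (1:ℝ) ≤ y := by
            have h1 : (1:ℝ) ≤ x / l := (one_le_div hl).mpr hxl.le
            calc (1:ℝ) ≤ x / l := h1
              _ ≤ (2:ℝ)^i * (x/l) := le_mul_of_one_le_left (by positivity)
                  (one_le_pow₀ (by norm_num))
          have hyx : y ≤ l * x := by
            have h1 : (2:ℝ)^i ≤ (2:ℝ)^(2*ν) :=
              pow_le_pow_right₀ (by norm_num) (le_of_lt (Finset.mem_range.mp hi))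
            have h2 : (2:ℝ)^(2*ν) = l * l := by rw [two_mul, pow_add]
            calc y = (2:ℝ)^i * (x/l) := rfl
              _ ≤ (l*l) * (x/l) := by
                  apply mul_le_mul_of_nonneg_right _ (by positivity)
                  rw [← h2]; exact h1
              _ = l * x := by field_simp
          have hεn0 : 0 ≤ (γ+1) * (1/2:ℝ)^n := by positivity
          calc uu f γ y ≤ R * y ^ ((γ+1) * (1/2:ℝ)^n) := ih y hy1
            _ ≤ R * (l*x) ^ ((γ+1) * (1/2:ℝ)^n) := by
                apply mul_le_mul_of_nonneg_left _ hR0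
                exact Real.rpow_le_rpow hy0.le hyx hεn0
            _ = R * (l ^ ((γ+1) * (1/2:ℝ)^n) * x ^ ((γ+1) * (1/2:ℝ)^n)) := by
                rw [Real.mul_rpow hl.le x0.le]
            _ ≤ R * (lβ * x ^ ((γ+1) * (1/2:ℝ)^n)) := by
                apply mul_le_mul_of_nonneg_left _ hR0
                apply mul_le_mul_of_nonneg_right _ (Real.rpow_nonneg x0.le _)
                apply Real.rpow_le_rpow_of_exponent_le hl1
                calc (γ+1) * (1/2:ℝ)^n ≤ (γ+1) * 1 := by
                      apply mul_le_mul_of_nonneg_left _ hβ.le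
                      exact pow_le_one₀ (by norm_num) (by norm_num)
                  _ = γ + 1 := mul_one _
            _ = R * lβ * x ^ ((γ+1) * (1/2:ℝ)^n) := by ring
        have hsum : ∑ i ∈ Finset.range (2*ν), uu f γ ((2:ℝ)^i * (x/l)) ≤
            (2*ν) * (R * lβ * x ^ ((γ+1) * (1/2:ℝ)^n)) := by
          calc ∑ i ∈ Finset.range (2*ν), uu f γ ((2:ℝ)^i * (x/l))
              ≤ ∑ _i ∈ Finset.range (2*ν), R * lβ * x ^ ((γ+1) * (1/2:ℝ)^n) :=
                Finset.sum_le_sum hui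
            _ = (2*ν) * (R * lβ * x ^ ((γ+1) * (1/2:ℝ)^n)) := by
                rw [Finset.sum_const, Finset.card_range, nsmul_eq_mul]
                push_cast
                ring
        -- put it together
        have hVP : B * (Vv f x * Pq γ x) ≤ P * R * x ^ ((γ+1) * (1/2:ℝ)^n) := by
          calc B * (Vv f x * Pq γ x)
              ≤ B * ((C * q₄ * q₂ * q₅) *
                  ∑ i ∈ Finset.range (2*ν), uu f γ ((2:ℝ)^i * (x/l))) := by
                apply mul_le_mul_of_nonneg_left _ hB0
                calc Vv f x * Pq γ x ≤ C * q₄ * q₂ * q₅ *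
                      ∑ i ∈ Finset.range (2*ν), uu f γ ((2:ℝ)^i * (x/l)) := hass
                  _ = (C * q₄ * q₂ * q₅) * _ := by ring
            _ ≤ B * ((C * q₄ * q₂ * q₅) * ((2*ν) * (R * lβ * x ^ ((γ+1) * (1/2:ℝ)^n)))) := by
                apply mul_le_mul_of_nonneg_left _ hB0
                exact mul_le_mul_of_nonneg_left hsum (by positivity)
            _ = P * R * x ^ ((γ+1) * (1/2:ℝ)^n) := by rw [hP]; push_cast; ring
        have hxsplit : x ^ ((γ+1) * (1/2:ℝ)^n) =
            x ^ ((γ+1) * (1/2:ℝ)^(n+1)) * x ^ ((γ+1) * (1/2:ℝ)^(n+1)) := by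
          rw [← Real.rpow_add x0]
          congr 1
          rw [pow_succ]
          ring
        have hsqrt : Real.sqrt (B * (Vv f x * Pq γ x)) ≤
            Real.sqrt P * Real.sqrt R * x ^ ((γ+1) * (1/2:ℝ)^(n+1)) := by
          have h1 : Real.sqrt (B * (Vv f x * Pq γ x)) ≤
              Real.sqrt (P * R * x ^ ((γ+1) * (1/2:ℝ)^n)) := Real.sqrt_le_sqrt hVP
          have h2 : Real.sqrt (P * R * x ^ ((γ+1) * (1/2:ℝ)^n)) =
              Real.sqrt P * Real.sqrt R * x ^ ((γ+1) * (1/2:ℝ)^(n+1)) := by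
            rw [hxsplit, show P * R * (x ^ ((γ+1) * (1/2:ℝ)^(n+1)) * x ^ ((γ+1) * (1/2:ℝ)^(n+1)))
                = (P * R) * (x ^ ((γ+1) * (1/2:ℝ)^(n+1)) * x ^ ((γ+1) * (1/2:ℝ)^(n+1))) by ring]
            rw [Real.sqrt_mul (by positivity) _, Real.sqrt_mul hP0 R,
              Real.sqrt_mul_self (Real.rpow_nonneg x0.le _)]
          rw [← h2]
          exact h1
        calc uu f γ x ≤ 2*B + 3*Real.sqrt (B * (Vv f x * Pq γ x)) := hcore
          _ ≤ 2*B + 3*(Real.sqrt P * Real.sqrt R * x ^ ((γ+1) * (1/2:ℝ)^(n+1))) := by linarith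
          _ ≤ 2*B * x ^ ((γ+1) * (1/2:ℝ)^(n+1)) +
              3*Real.sqrt P * Real.sqrt R * x ^ ((γ+1) * (1/2:ℝ)^(n+1)) := by
              have := le_mul_of_one_le_right (by positivity : (0:ℝ) ≤ 2*B) hx1
              linarith
          _ = (2*B + 3*Real.sqrt P * Real.sqrt R) * x ^ ((γ+1) * (1/2:ℝ)^(n+1)) := by ring
          _ ≤ R * x ^ ((γ+1) * (1/2:ℝ)^(n+1)) :=
              mul_le_mul_of_nonneg_right hRcond (Real.rpow_nonneg x0.le _)
  -- pass to the limit
  refine ⟨R, hR1, fun x hx => ?_⟩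
  have x0 : (0:ℝ) < x := lt_of_lt_of_le one_pos hx
  have hlim : Tendsto (fun n : ℕ => R * x ^ ((γ+1) * (1/2:ℝ)^n)) atTop (nhds (R * 1)) := by
    have h1 : Tendsto (fun n : ℕ => (γ+1) * (1/2:ℝ)^n) atTop (nhds 0) := by
      have h2 : Tendsto (fun n : ℕ => (1/2:ℝ)^n) atTop (nhds 0) :=
        tendsto_pow_atTop_nhds_zero_of_lt_one (by norm_num) (by norm_num)
      have := h2.const_mul (γ+1)
      simpa using this
    have h3 : Tendsto (fun e : ℝ => R * x ^ e) (nhds 0) (nhds (R * x ^ (0:ℝ))) := by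
      apply Tendsto.const_mul
      have hcont : ContinuousAt (fun e : ℝ => x ^ e) 0 := by
        apply Real.continuousAt_const_rpow (ne_of_gt x0)
      exact hcont
    have := h3.comp h1
    simpa [Real.rpow_zero, Function.comp_def] using this
  rw [mul_one] at hlim
  exact ge_of_tendsto hlim (Filter.Eventually.of_forall (fun n => main n x hx))

end GMAux

open GMAux

set_option maxHeartbeats 2000000 in
/-- If `f` is real-valued general monotone, `t^{2α+1} f(t) ∈ L¹(0,1)` and
`∫_0^∞ t^{2α+1} f(t) dt` converges, then `sup_{t>0} t^{2α+2} |f(t)| < ∞`. -/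
theorem GMFun_weighted_sup_finite (f : ℝ → ℝ) (C : ℝ) (hC : 1 < C) (ν : ℕ) (hν : 1 ≤ ν)
    (hGM : GMFun C (2^ν) f) (α : ℝ)
    (hint : IntegrableOn (fun t => t ^ (2*α+1) * |f t|) (Set.Ioo 0 1))
    (hconv : ∃ I : ℝ, Tendsto (fun N : ℝ => ∫ t in (0:ℝ)..N, t ^ (2*α+1) * f t)
      atTop (nhds I)) :
    ∃ M : ℝ, ∀ t > (0:ℝ), t ^ (2*α+2) * |f t| ≤ M := by
  obtain ⟨hBV, htend, hGM3⟩ := hGM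
  set γ : ℝ := 2*α+1 with hγdef
  have hexp : ∀ t : ℝ, t ^ (2*α+2) = t ^ (γ+1) := by
    intro t
    rw [hγdef]
    congr 1
    ring
  have hC0 : (0:ℝ) ≤ C := le_trans zero_le_one hC.le
  set l : ℝ := (2:ℝ)^ν with hldef
  have hl0 : (0:ℝ) < l := pow_pos (by norm_num) ν
  have hl1 : (1:ℝ) ≤ l := one_le_pow₀ (by norm_num)
  have hl2 : (2:ℝ) ≤ l := by
    rw [hldef]
    calc (2:ℝ) = 2^1 := (pow_one 2).symm
      _ ≤ 2^ν := pow_le_pow_right₀ (by norm_num) hν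
  -- ## Step 1 : a uniform bound for partial signed integrals on [1,∞)
  obtain ⟨I, hI⟩ := hconv
  have hev : ∀ᶠ N in (atTop : Filter ℝ), dist (∫ t in (0:ℝ)..N, t ^ γ * f t) I < 1 :=
    hI.eventually (Metric.ball_mem_nhds I one_pos)
  obtain ⟨N₀, hN₀⟩ := eventually_atTop.mp hev
  set N₁ : ℝ := max N₀ 1 with hN₁def
  have hN₁1 : (1:ℝ) ≤ N₁ := le_max_right _ _
  set B₁ : ℝ := ∫ t in Ioc 1 N₁, t ^ γ * |f t| with hB₁def
  have hB₁0 : 0 ≤ B₁ := setIntegral_nonneg measurableSet_Ioc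
    (fun t ht => mul_nonneg (Real.rpow_nonneg (le_trans zero_le_one ht.1.le) γ) (abs_nonneg _))
  have hIg1 : IntegrableOn (fun t => t ^ γ * |f t|) (Ioc 1 N₁) volume :=
    (integrableOn_rpow_mul_abs hBV one_pos γ).mono_set Ioc_subset_Icc_self
  have hHbd : ∀ N : ℝ, 1 ≤ N → |∫ t in (0:ℝ)..N, t ^ γ * f t| ≤ |I| + 1 + B₁ := by
    intro N hN
    have hN0 : (0:ℝ) < N := lt_of_lt_of_le one_pos hN
    rcases le_or_gt N₁ N with h | h
    · have h1 := hN₀ N (le_trans (le_max_left _ _) h)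
      rw [Real.dist_eq] at h1
      have h2 : |∫ t in (0:ℝ)..N, t ^ γ * f t| - |I| ≤
          |(∫ t in (0:ℝ)..N, t ^ γ * f t) - I| := abs_sub_abs_le_abs_sub _ _
      linarith
    · have hadd : (∫ t in (0:ℝ)..N, t ^ γ * f t) + (∫ t in N..N₁, t ^ γ * f t) =
          ∫ t in (0:ℝ)..N₁, t ^ γ * f t :=
        intervalIntegral.integral_add_adjacent_intervals
          (II_f_zero hBV hint hN0.le) (II_f hBV hN0 h.le γ)
      have hN₁bd : |∫ t in (0:ℝ)..N₁, t ^ γ * f t| ≤ |I| + 1 := by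
        have h1 := hN₀ N₁ (le_max_left _ _)
        rw [Real.dist_eq] at h1
        have h2 : |∫ t in (0:ℝ)..N₁, t ^ γ * f t| - |I| ≤
            |(∫ t in (0:ℝ)..N₁, t ^ γ * f t) - I| := abs_sub_abs_le_abs_sub _ _
        linarith
      have hmid : |∫ t in N..N₁, t ^ γ * f t| ≤ B₁ := by
        rw [intervalIntegral.integral_of_le h.le]
        calc |∫ t in Ioc N N₁, t ^ γ * f t| ≤ ∫ t in Ioc N N₁, |t ^ γ| * |f t| := by
              simpa [Real.norm_eq_abs, abs_mul] using
                MeasureTheory.norm_integral_le_integral_norm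
                  (μ := volume.restrict (Ioc N N₁)) (fun t => t ^ γ * f t)
          _ = ∫ t in Ioc N N₁, t ^ γ * |f t| := by
              apply setIntegral_congr_fun measurableSet_Ioc
              intro t ht
              dsimp only
              rw [abs_of_nonneg (Real.rpow_nonneg (le_trans hN0.le ht.1.le) γ)]
          _ ≤ B₁ := by
              apply setIntegral_mono_set hIg1
              · filter_upwards [ae_restrict_mem measurableSet_Ioc] with t ht
                simpa using mul_nonneg
                  (Real.rpow_nonneg (le_trans zero_le_one ht.1.le) γ) (abs_nonneg _)
              · exact HasSubset.Subset.eventuallyLE (Ioc_subset_Ioc_left hN)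
      calc |∫ t in (0:ℝ)..N, t ^ γ * f t|
          = |(∫ t in (0:ℝ)..N₁, t ^ γ * f t) - (∫ t in N..N₁, t ^ γ * f t)| := by
            rw [← hadd]; ring_nf
        _ ≤ |∫ t in (0:ℝ)..N₁, t ^ γ * f t| + |∫ t in N..N₁, t ^ γ * f t| := abs_sub _ _
        _ ≤ |I| + 1 + B₁ := by linarith
  set B : ℝ := max 1 (2*(|I| + 1 + B₁)) with hBdef
  have hB1 : (1:ℝ) ≤ B := le_max_left _ _
  have hB : ∀ p q : ℝ, 1 ≤ p → p ≤ q → |∫ t in p..q, t ^ γ * f t| ≤ B := by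
    intro p q hp hpq
    have hp0 : (0:ℝ) < p := lt_of_lt_of_le one_pos hp
    have hadd : (∫ t in (0:ℝ)..p, t ^ γ * f t) + (∫ t in p..q, t ^ γ * f t) =
        ∫ t in (0:ℝ)..q, t ^ γ * f t :=
      intervalIntegral.integral_add_adjacent_intervals
        (II_f_zero hBV hint hp0.le) (II_f hBV hp0 hpq γ)
    have h1 := hHbd p hp
    have h2 := hHbd q (le_trans hp hpq)
    calc |∫ t in p..q, t ^ γ * f t|
        = |(∫ t in (0:ℝ)..q, t ^ γ * f t) - (∫ t in (0:ℝ)..p, t ^ γ * f t)| := by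
          rw [← hadd]; ring_nf
      _ ≤ |∫ t in (0:ℝ)..q, t ^ γ * f t| + |∫ t in (0:ℝ)..p, t ^ γ * f t| := abs_sub _ _
      _ ≤ 2*(|I| + 1 + B₁) := by linarith
      _ ≤ B := le_max_right _ _
  -- ## Step 2 : a uniform bound for |f| on [1,∞)
  have hev2 : ∀ᶠ t in (atTop : Filter ℝ), dist (f t) 0 < 1 :=
    htend.eventually (Metric.ball_mem_nhds 0 one_pos)
  obtain ⟨T, hT⟩ := eventually_atTop.mp hev2
  set T₁ : ℝ := max T 1 with hT₁def
  have hT₁1 : (1:ℝ) ≤ T₁ := le_max_right _ _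
  set S : ℝ := 1 + (|f 1| + (eVariationOn f (Icc 1 T₁)).toReal) with hSdef
  have hS0 : 0 ≤ S := by positivity
  have hS : ∀ t : ℝ, 1 ≤ t → |f t| ≤ S := by
    intro t ht
    rcases le_or_gt t T₁ with h | h
    · have h1 : |f t| - |f 1| ≤ |f t - f 1| := abs_sub_abs_le_abs_sub _ _
      have h2 : |f t - f 1| ≤ (eVariationOn f (Icc 1 T₁)).toReal :=
        osc_le_var hBV one_pos hT₁1 ⟨ht, h⟩ ⟨le_rfl, hT₁1⟩
      rw [hSdef]
      linarith
    · have h1 := hT t (le_trans (le_max_left _ _) h.le)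
      rw [Real.dist_eq, sub_zero] at h1
      rw [hSdef]
      have h2 : (0:ℝ) ≤ (eVariationOn f (Icc 1 T₁)).toReal := ENNReal.toReal_nonneg
      have h3 : (0:ℝ) ≤ |f 1| := abs_nonneg _
      linarith
  -- ## Step 3 : constants
  set q₁ : ℝ := min 1 ((2:ℝ)^γ) with hq1
  have hq₁0 : 0 < q₁ := lt_min one_pos (Real.rpow_pos_of_pos (by norm_num) γ)
  set q₄ : ℝ := max 1 ((2:ℝ)^(-(γ+1))) with hq4
  set q₂ : ℝ := max 1 ((2:ℝ)^γ) with hq2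
  set q₅ : ℝ := max ((l⁻¹) ^ (γ+1)) (l ^ (γ+1)) with hq5
  have hq40 : (0:ℝ) ≤ q₄ := le_trans zero_le_one (le_max_left _ _)
  have hq20 : (0:ℝ) ≤ q₂ := le_trans zero_le_one (le_max_left _ _)
  have hq50 : (0:ℝ) ≤ q₅ := le_trans (Real.rpow_nonneg (inv_pos.mpr hl0).le _) (le_max_left _ _)
  set K₅ : ℝ := C * q₄ * q₂ * q₅ with hK5
  have hK₅0 : 0 ≤ K₅ := by positivity
  set A₀ : ℝ := ∫ t in Ioo (0:ℝ) 1, t ^ γ * |f t| with hA₀def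
  have hA₀0 : 0 ≤ A₀ := setIntegral_nonneg measurableSet_Ioo
    (fun t ht => mul_nonneg (Real.rpow_nonneg ht.1.le γ) (abs_nonneg _))
  -- ## Step 4 : region (0, 1/l]
  have hregA : ∀ t : ℝ, 0 < t → t ≤ l⁻¹ → t ^ (γ+1) * |f t| ≤ (A₀ + K₅*(2*ν*A₀))/q₁ := by
    intro t ht0 htl
    have h2tl : 2*t ≤ 1 := by
      have : 2*t ≤ 2*l⁻¹ := by linarith
      have h2 : 2*l⁻¹ ≤ 1 := by
        rw [mul_inv_le_iff₀ hl0, one_mul]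
        exact hl2
      linarith
    have huu : uu f γ t ≤ A₀ := by
      apply gmono le_rfl hint
      intro z hz
      exact ⟨lt_trans ht0 hz.1, lt_of_lt_of_le hz.2 h2tl⟩
    have hass := assemble hBV hC0 (γ := γ) hGM3 ht0
    have hui : ∀ i ∈ Finset.range (2*ν), uu f γ ((2:ℝ)^i * (t/l)) ≤ A₀ := by
      intro i hi
      apply gmono le_rfl hint
      intro z hz
      have hy0 : (0:ℝ) < (2:ℝ)^i * (t/l) := mul_pos (pow_pos (by norm_num) i) (div_pos ht0 hl0)
      refine ⟨lt_trans hy0 hz.1, lt_of_lt_of_le hz.2 ?_⟩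
      have h1 : (2:ℝ) * ((2:ℝ)^i * (t/l)) = (2:ℝ)^(i+1) * (t/l) := by rw [pow_succ]; ring
      rw [h1]
      have h2 : (2:ℝ)^(i+1) ≤ (2:ℝ)^(2*ν) :=
        pow_le_pow_right₀ (by norm_num) (Finset.mem_range.mp hi)
      have h3 : (2:ℝ)^(2*ν) = l*l := by rw [hldef, two_mul, pow_add]
      calc (2:ℝ)^(i+1) * (t/l) ≤ (l*l) * (t/l) := by
            apply mul_le_mul_of_nonneg_right _ (by positivity)
            rw [← h3]; exact h2
        _ = l * t := by field_simp
        _ ≤ l * l⁻¹ := by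
            apply mul_le_mul_of_nonneg_left htl hl0.le
        _ = 1 := mul_inv_cancel₀ hl0.ne'
    have hsum : ∑ i ∈ Finset.range (2*ν), uu f γ ((2:ℝ)^i * (t/l)) ≤ (2*ν) * A₀ := by
      calc ∑ i ∈ Finset.range (2*ν), uu f γ ((2:ℝ)^i * (t/l))
          ≤ ∑ _i ∈ Finset.range (2*ν), A₀ := Finset.sum_le_sum hui
        _ = (2*ν) * A₀ := by rw [Finset.sum_const, Finset.card_range, nsmul_eq_mul]; push_cast; ring
    have hVP : Vv f t * Pq γ t ≤ K₅ * (2*ν*A₀) := by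
      calc Vv f t * Pq γ t ≤ C * q₄ * q₂ * q₅ *
            ∑ i ∈ Finset.range (2*ν), uu f γ ((2:ℝ)^i * (t/l)) := hass
        _ ≤ C * q₄ * q₂ * q₅ * ((2*ν) * A₀) :=
            mul_le_mul_of_nonneg_left hsum (by positivity)
        _ = K₅ * (2*ν*A₀) := by rw [hK5]
    have hPW := pointwise_bound hBV (γ := γ) ht0
    rw [le_div_iff₀ hq₁0]
    calc t ^ (γ+1) * |f t| * q₁ = |f t| * (q₁ * t ^ (γ+1)) := by ring
      _ ≤ |f t| * Pq γ t := mul_le_mul_of_nonneg_left (Pq_lb ht0) (abs_nonneg _)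
      _ ≤ uu f γ t + Vv f t * Pq γ t := hPW
      _ ≤ A₀ + K₅*(2*ν*A₀) := add_le_add huu hVP
  -- ## Step 5 : region [1/l, l]
  have hregB : ∀ t : ℝ, l⁻¹ ≤ t → t ≤ l →
      t ^ (γ+1) * |f t| ≤ q₅ * (|f l⁻¹| + (eVariationOn f (Icc l⁻¹ (2*l))).toReal) := by
    intro t h1 h2
    have hli : (0:ℝ) < l⁻¹ := inv_pos.mpr hl0
    have hll : l⁻¹ ≤ 2*l := by
      calc l⁻¹ ≤ 1 := by
            rw [inv_le_one_iff₀]; right; exact hl1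
        _ ≤ 2*l := by linarith
    have hfb : |f t| ≤ |f l⁻¹| + (eVariationOn f (Icc l⁻¹ (2*l))).toReal := by
      have h3 : |f t| - |f l⁻¹| ≤ |f t - f l⁻¹| := abs_sub_abs_le_abs_sub _ _
      have h4 : |f t - f l⁻¹| ≤ (eVariationOn f (Icc l⁻¹ (2*l))).toReal :=
        osc_le_var hBV hli hll ⟨h1, by linarith⟩ ⟨le_rfl, hll⟩
      linarith
    have htβ : t ^ (γ+1) ≤ q₅ := rpow_base_le hli h1 h2
    calc t ^ (γ+1) * |f t| ≤ q₅ * |f t| :=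
          mul_le_mul_of_nonneg_right htβ (abs_nonneg _)
      _ ≤ q₅ * (|f l⁻¹| + (eVariationOn f (Icc l⁻¹ (2*l))).toReal) :=
          mul_le_mul_of_nonneg_left hfb hq50
  -- ## Step 6 : region [l, ∞)
  have hregC : ∃ M₃ : ℝ, ∀ t : ℝ, l ≤ t → t ^ (γ+1) * |f t| ≤ M₃ := by
    rcases le_or_gt (γ+1) 0 with hβ | hβ
    · refine ⟨S, fun t ht => ?_⟩
      have ht1 : (1:ℝ) ≤ t := le_trans hl1 ht
      have h1 : t ^ (γ+1) ≤ 1 := Real.rpow_le_one_of_one_le_of_nonpos ht1 hβ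
      calc t ^ (γ+1) * |f t| ≤ 1 * |f t| :=
            mul_le_mul_of_nonneg_right h1 (abs_nonneg _)
        _ = |f t| := one_mul _
        _ ≤ S := hS t ht1
    · -- γ + 1 > 0 : use the bootstrap bound
      set A₄ : ℝ := ∫ t in Ioo (2⁻¹:ℝ) (2*l), t ^ γ * |f t| with hA₄def
      have hA4 : ∀ x : ℝ, 1 ≤ x → x ≤ l → uu f γ x ≤ A₄ := by
        intro x hx1 hxl
        apply gmono (by norm_num : (0:ℝ) ≤ 2⁻¹)
        · exact (integrableOn_rpow_mul_abs hBV (by norm_num : (0:ℝ) < 2⁻¹) γ).mono_set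
            Ioo_subset_Icc_self
        · intro z hz
          constructor
          · calc (2⁻¹:ℝ) < 1 := by norm_num
              _ ≤ x := hx1
              _ < z := hz.1
          · calc z < 2*x := hz.2
              _ ≤ 2*l := by linarith
      obtain ⟨R, hR1, hR⟩ := ubound hBV hC0 (γ := γ) hGM3 hB1 hB hS0 hS hβ hA4
      refine ⟨(R + K₅*(2*ν*R))/q₁, fun t ht => ?_⟩
      have ht1 : (1:ℝ) ≤ t := le_trans hl1 ht
      have ht0 : (0:ℝ) < t := lt_of_lt_of_le one_pos ht1
      have huu : uu f γ t ≤ R := hR t ht1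
      have hass := assemble hBV hC0 (γ := γ) hGM3 ht0
      have hui : ∀ i ∈ Finset.range (2*ν), uu f γ ((2:ℝ)^i * (t/l)) ≤ R := by
        intro i hi
        apply hR
        have h1 : (1:ℝ) ≤ t / l := (one_le_div hl0).mpr ht
        calc (1:ℝ) ≤ t / l := h1
          _ ≤ (2:ℝ)^i * (t/l) := le_mul_of_one_le_left (by positivity)
              (one_le_pow₀ (by norm_num))
      have hsum : ∑ i ∈ Finset.range (2*ν), uu f γ ((2:ℝ)^i * (t/l)) ≤ (2*ν) * R := by
        calc ∑ i ∈ Finset.range (2*ν), uu f γ ((2:ℝ)^i * (t/l))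
            ≤ ∑ _i ∈ Finset.range (2*ν), R := Finset.sum_le_sum hui
          _ = (2*ν) * R := by rw [Finset.sum_const, Finset.card_range, nsmul_eq_mul]; push_cast; ring
      have hVP : Vv f t * Pq γ t ≤ K₅ * (2*ν*R) := by
        calc Vv f t * Pq γ t ≤ C * q₄ * q₂ * q₅ *
              ∑ i ∈ Finset.range (2*ν), uu f γ ((2:ℝ)^i * (t/l)) := hass
          _ ≤ C * q₄ * q₂ * q₅ * ((2*ν) * R) :=
              mul_le_mul_of_nonneg_left hsum (by positivity)
          _ = K₅ * (2*ν*R) := by rw [hK5]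
      have hPW := pointwise_bound hBV (γ := γ) ht0
      rw [le_div_iff₀ hq₁0]
      calc t ^ (γ+1) * |f t| * q₁ = |f t| * (q₁ * t ^ (γ+1)) := by ring
        _ ≤ |f t| * Pq γ t := mul_le_mul_of_nonneg_left (Pq_lb ht0) (abs_nonneg _)
        _ ≤ uu f γ t + Vv f t * Pq γ t := hPW
        _ ≤ R + K₅*(2*ν*R) := add_le_add huu hVP
  -- ## final combination
  obtain ⟨M₃, hM₃⟩ := hregC
  refine ⟨max (max ((A₀ + K₅*(2*ν*A₀))/q₁)
      (q₅ * (|f l⁻¹| + (eVariationOn f (Icc l⁻¹ (2*l))).toReal))) M₃, fun t ht => ?_⟩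
  rw [hexp t]
  rcases le_or_gt t l⁻¹ with h1 | h1
  · exact le_trans (hregA t ht h1) (le_trans (le_max_left _ _) (le_max_left _ _))
  · rcases le_or_gt t l with h2 | h2
    · exact le_trans (hregB t h1.le h2) (le_trans (le_max_right _ _) (le_max_left _ _))
    · exact le_trans (hM₃ t h2.le) (le_max_right _ _)
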